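/- Let C be a pure injective R-module. Then the class ⊥C = {M : Ext¹_R(M, C) = 0} is closed under pure quotient modules: if M ∈ ⊥C and 0 → M′ → M → M″ → 0 is pure exact, then M″ ∈ ⊥C. -/

import Mathlib

universe u

open TensorProduct CategoryTheory DirectSum

noncomputable section

/-- The submodule of relations presenting the tensor product `Q ⊗_R M` as a quotient of
`Q ⊗_ℤ M`, for a right `R`-module `Q` and a left `R`-module `M`. -/
def tensorRelations (R : Type u) [Ring R] (Q : Type u) [AddCommGroup Q] [Module Rᵐᵒᵖ Q]
    (M : Type u) [AddCommGroup M] [Module R M] : Submodule ℤ (TensorProduct ℤ Q M) :=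
  Submodule.span ℤ
    {x | ∃ (q : Q) (r : R) (m : M), x = (MulOpposite.op r • q) ⊗ₜ[ℤ] m - q ⊗ₜ[ℤ] (r • m)}

/-- The map `Q ⊗_R M → Q ⊗_R N` induced by `f` is injective, where `Q ⊗_R -` is realized
as the quotient of `Q ⊗_ℤ -` by `tensorRelations`. -/
def StaysInjective (R : Type u) [Ring R] (Q : Type u) [AddCommGroup Q] [Module Rᵐᵒᵖ Q]
    {M N : Type u} [AddCommGroup M] [Module R M] [AddCommGroup N] [Module R N]
    (f : M →ₗ[R] N) : Prop :=
  ∀ z : TensorProduct ℤ Q M,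
    LinearMap.lTensor Q f.toAddMonoidHom.toIntLinearMap z ∈ tensorRelations R Q N →
      z ∈ tensorRelations R Q M

/-- `f` is a pure monomorphism of left `R`-modules: it is injective and stays injective
after tensoring with every right `R`-module. -/
def IsPureMono (R : Type u) [Ring R] {M N : Type u} [AddCommGroup M] [Module R M]
    [AddCommGroup N] [Module R N] (f : M →ₗ[R] N) : Prop :=
  Function.Injective f ∧
    ∀ (Q : Type u) [AddCommGroup Q] [Module Rᵐᵒᵖ Q], StaysInjective R Q f

/-- `N` is a pure submodule of `M`. -/
def IsPureSubmodule (R : Type u) [Ring R] {M : Type u} [AddCommGroup M] [Module R M]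
    (N : Submodule R M) : Prop :=
  IsPureMono R N.subtype

/-- `0 → M' → M → M'' → 0` is a pure exact sequence of left `R`-modules. -/
def IsPureExactSeq (R : Type u) [Ring R] {M' M M'' : Type u}
    [AddCommGroup M'] [Module R M'] [AddCommGroup M] [Module R M]
    [AddCommGroup M''] [Module R M'']
    (f : M' →ₗ[R] M) (g : M →ₗ[R] M'') : Prop :=
  Function.Surjective g ∧ Function.Exact f g ∧ IsPureMono R f

/-- `C` is a pure injective left `R`-module: every homomorphism to `C` extends along
every pure monomorphism. -/
def IsPureInjective (R : Type u) [Ring R] (C : Type u) [AddCommGroup C] [Module R C] : Prop :=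
  ∀ (M N : Type u) [AddCommGroup M] [Module R M] [AddCommGroup N] [Module R N]
    (f : M →ₗ[R] N), IsPureMono R f → ∀ φ : M →ₗ[R] C, ∃ ψ : N →ₗ[R] C, ψ ∘ₗ f = φ

/-- `Ext¹_R(M, N) = 0`, phrased via the `Ext` bifunctor on the category of
left `R`-modules. -/
def Ext1Zero (R : Type u) [Ring R] (M N : Type u) [AddCommGroup M] [Module R M]
    [AddCommGroup N] [Module R N] : Prop :=
  Subsingleton (((Ext ℤ (ModuleCat.{u} R) 1).obj (Opposite.op (ModuleCat.of R M))).obj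
    (ModuleCat.of R N))

namespace PExtAux

variable {R : Type u} [Ring R]

/-- Descend a linear map along a surjection whose kernel it kills. -/
lemma descend {A B D : Type u} [AddCommGroup A] [Module R A] [AddCommGroup B] [Module R B]
    [AddCommGroup D] [Module R D] (ρ : A →ₗ[R] B) (h : A →ₗ[R] D)
    (hρ : Function.Surjective ρ) (hker : ∀ a, ρ a = 0 → h a = 0) :
    ∃ σ : B →ₗ[R] D, ∀ a, σ (ρ a) = h a := by
  have hle : LinearMap.ker ρ ≤ LinearMap.ker h := fun a ha => hker a ha
  let e := ρ.quotKerEquivOfSurjective hρ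
  refine ⟨((LinearMap.ker ρ).liftQ h hle).comp
    (e.symm : B →ₗ[R] (A ⧸ LinearMap.ker ρ)), fun a => ?_⟩
  have h1 : e (Submodule.Quotient.mk a) = ρ a := by
    simp [e, LinearMap.quotKerEquivOfSurjective, LinearMap.quotKerEquivRange_apply_mk]
  have h2 : e.symm (ρ a) = Submodule.Quotient.mk a := by
    rw [LinearEquiv.symm_apply_eq, h1]
  simp [LinearMap.comp_apply, h2]

lemma subsingleton_of_isZero {M : ModuleCat ℤ} (h : Limits.IsZero M) : Subsingleton M := by
  constructor
  intro a b
  have h0 : (𝟙 M) = (0 : M ⟶ M) := h.eq_of_src _ _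
  have ha := ConcreteCategory.congr_hom h0 a
  have hb := ConcreteCategory.congr_hom h0 b
  simpa using ha.trans hb.symm

/-- `Ext¹(X, C) = 0` iff every cocycle on a projective resolution is a coboundary. -/
lemma ext1Zero_iff (C : Type u) [AddCommGroup C] [Module R C]
    (X : Type u) [AddCommGroup X] [Module R X]
    (P : ProjectiveResolution (ModuleCat.of R X)) :
    Ext1Zero R X C ↔
      ∀ φ : P.complex.X 1 ⟶ ModuleCat.of R C, P.complex.d 2 1 ≫ φ = 0 →
        ∃ ψ : P.complex.X 0 ⟶ ModuleCat.of R C, P.complex.d 1 0 ≫ ψ = φ := by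
  set K := P.complex.linearYonedaObj ℤ (ModuleCat.of R C) with hK
  have e : (((Ext ℤ (ModuleCat.{u} R) 1).obj (Opposite.op (ModuleCat.of R X))).obj
      (ModuleCat.of R C) : Type u) ≃ (K.homology 1 : Type u) :=
    ((forget (ModuleCat ℤ)).mapIso (P.isoExt 1 (ModuleCat.of R C))).toEquiv
  have h1 : Ext1Zero R X C ↔ Subsingleton (K.homology 1 : Type u) := by
    unfold Ext1Zero
    exact ⟨fun h => @Equiv.subsingleton _ _ e.symm h, fun h => @Equiv.subsingleton _ _ e h⟩
  have h2 : Subsingleton (K.homology 1 : Type u) ↔ K.ExactAt 1 := by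
    rw [HomologicalComplex.exactAt_iff_isZero_homology]
    exact ⟨fun h => ModuleCat.isZero_of_subsingleton _, fun h => subsingleton_of_isZero h⟩
  have h3 : K.ExactAt 1 ↔ (K.sc' 0 1 2).Exact :=
    K.exactAt_iff' 0 1 2 (by simp) (by simp)
  rw [h1, h2, h3, ShortComplex.moduleCat_exact_iff]
  constructor
  · exact fun h φ hφ => h φ hφ
  · exact fun h x hx => h x hx

/-- If `Ext¹(X, C) = 0` then any map `ker q → C` extends along any surjection `q : Y → X`. -/
lemma lift_of_ext1Zero (C : Type u) [AddCommGroup C] [Module R C]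
    (X : Type u) [AddCommGroup X] [Module R X] (hX : Ext1Zero R X C)
    {Y : Type u} [AddCommGroup Y] [Module R Y] (q : Y →ₗ[R] X) (hq : Function.Surjective q)
    (φb : (LinearMap.ker q) →ₗ[R] C) :
    ∃ σ : Y →ₗ[R] C, ∀ k : LinearMap.ker q, σ k = φb k := by
  obtain ⟨P⟩ : Nonempty (ProjectiveResolution (ModuleCat.of R X)) :=
    HasProjectiveResolution.out
  set π₀ : P.complex.X 0 →ₗ[R] X := (P.π.f 0 : P.complex.X 0 ⟶ ModuleCat.of R X).hom with hπ₀def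
  have hπ₀ : Function.Surjective π₀ :=
    (ModuleCat.epi_iff_surjective (P.π.f 0)).1 inferInstance
  haveI : Epi (X := ModuleCat.of R Y)
      (Y := ((ChainComplex.single₀ (ModuleCat R)).obj (ModuleCat.of R X)).X 0) (ModuleCat.ofHom q) := (ModuleCat.epi_iff_surjective _).2 hq
  set t : P.complex.X 0 →ₗ[R] Y :=
    (Projective.factorThru (P.π.f 0) (ModuleCat.ofHom q) :
      P.complex.X 0 ⟶ ModuleCat.of R Y).hom with htdef
  have ht : ∀ z, q (t z) = π₀ z := by
    intro z
    have := Projective.factorThru_comp (P.π.f 0) (ModuleCat.ofHom q)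
    exact ConcreteCategory.congr_hom this z
  have hd10 : ∀ z, π₀ (P.complex.d 1 0 z) = (0 : X) := by
    intro z
    exact ConcreteCategory.congr_hom P.complex_d_comp_π_f_zero z
  have hex0 : ∀ x, π₀ x = 0 → ∃ z, P.complex.d 1 0 z = x :=
    (ShortComplex.moduleCat_exact_iff _).1 P.exact₀
  have hmemd : ∀ z : P.complex.X 1, t (P.complex.d 1 0 z) ∈ LinearMap.ker q := by
    intro z
    simp only [LinearMap.mem_ker, ht, hd10]
  set c : P.complex.X 1 →ₗ[R] (LinearMap.ker q) :=
    LinearMap.codRestrict (LinearMap.ker q) (t ∘ₗ ((P.complex.d 1 0).hom :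
      P.complex.X 1 →ₗ[R] P.complex.X 0)) hmemd with hcdef
  set φ : P.complex.X 1 ⟶ ModuleCat.of R C := ModuleCat.ofHom (φb ∘ₗ c : P.complex.X 1 →ₗ[R] C) with hφdef
  have hφap : ∀ z, φ z = φb (c z) := fun z => rfl
  have hcap : ∀ z, (c z : Y) = t (P.complex.d 1 0 z) := fun z => rfl
  have hcocycle : P.complex.d 2 1 ≫ φ = 0 := by
    apply ModuleCat.hom_ext
    apply LinearMap.ext
    intro z
    have hdd : P.complex.d 1 0 (P.complex.d 2 1 z) = 0 :=
      ConcreteCategory.congr_hom (P.complex.d_comp_d 2 1 0) z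
    have hc : c (P.complex.d 2 1 z) = 0 := by
      apply Subtype.ext
      rw [hcap, hdd, map_zero]
      rfl
    show φb (c (P.complex.d 2 1 z)) = 0
    rw [hc, map_zero]
  obtain ⟨ψ0, hψ0⟩ := (ext1Zero_iff C X P).1 hX φ hcocycle
  set ψ1 : P.complex.X 0 →ₗ[R] C := (ψ0.hom : P.complex.X 0 →ₗ[R] C) with hψ1def
  have hψ1 : ∀ z, ψ1 (P.complex.d 1 0 z) = φb (c z) := by
    intro z
    exact ConcreteCategory.congr_hom hψ0 z
  -- descend along ρ : P₀ × ker q → Y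
  set ρ : (P.complex.X 0 × LinearMap.ker q) →ₗ[R] Y :=
    t ∘ₗ LinearMap.fst R _ _ + (LinearMap.ker q).subtype ∘ₗ LinearMap.snd R _ _ with hρdef
  have hρap : ∀ a : P.complex.X 0 × LinearMap.ker q, ρ a = t a.1 + (a.2 : Y) := fun a => rfl
  have hρ : Function.Surjective ρ := by
    intro y
    obtain ⟨z, hz⟩ := hπ₀ (q y)
    have hk : y - t z ∈ LinearMap.ker q := by
      simp [LinearMap.mem_ker, map_sub, ht, hz]
    refine ⟨(z, ⟨y - t z, hk⟩), ?_⟩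
    rw [hρap]
    show t z + (y - t z) = y
    abel
  set h : (P.complex.X 0 × LinearMap.ker q) →ₗ[R] C :=
    ψ1 ∘ₗ LinearMap.fst R _ _ + φb ∘ₗ LinearMap.snd R _ _ with hhdef
  have hhap : ∀ a : P.complex.X 0 × LinearMap.ker q, h a = ψ1 a.1 + φb a.2 := fun a => rfl
  have hker : ∀ a, ρ a = 0 → h a = 0 := by
    rintro ⟨z, k⟩ hzk
    rw [hρap] at hzk
    have hz0 : π₀ z = 0 := by
      have h0 : q (t z + (k : Y)) = 0 := by rw [hzk]; simp
      have hk0 : q (k : Y) = 0 := k.2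
      rw [map_add, hk0, add_zero, ht] at h0
      exact h0
    obtain ⟨w, hw⟩ := hex0 z hz0
    have hmem : t z ∈ LinearMap.ker q := by
      rw [LinearMap.mem_ker, ht, hz0]
    have e1 : ψ1 z = φb (c w) := by rw [← hw]; exact hψ1 w
    have e2 : c w = ⟨t z, hmem⟩ := by
      apply Subtype.ext
      rw [hcap, hw]
    have h2 : k = -(⟨t z, hmem⟩ : LinearMap.ker q) := by
      apply Subtype.ext
      show (k : Y) = -(t z)
      exact eq_neg_of_add_eq_zero_right hzk
    rw [hhap]
    show ψ1 z + φb k = 0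
    rw [e1, e2, h2, map_neg, add_neg_cancel]
  obtain ⟨σ, hσ⟩ := descend ρ h hρ hker
  refine ⟨σ, fun k => ?_⟩
  have h4 := hσ (0, k)
  rw [hρap, hhap] at h4
  simpa using h4

end PExtAux

theorem stmt5 (R : Type u) [Ring R] (C : Type u) [AddCommGroup C] [Module R C]
    (hC : IsPureInjective R C)
    (M' M M'' : Type u) [AddCommGroup M'] [Module R M'] [AddCommGroup M] [Module R M]
    [AddCommGroup M''] [Module R M'']
    (f : M' →ₗ[R] M) (g : M →ₗ[R] M'') (hpure : IsPureExactSeq R f g)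
    (hM : Ext1Zero R M C) :
    Ext1Zero R M'' C := by
  obtain ⟨hg, hexfg, hf⟩ := hpure
  obtain ⟨P⟩ : Nonempty (ProjectiveResolution (ModuleCat.of R M'')) :=
    HasProjectiveResolution.out
  refine (PExtAux.ext1Zero_iff C M'' P).2 ?_
  intro φ hφ
  set π₀ : P.complex.X 0 →ₗ[R] M'' := (P.π.f 0 : P.complex.X 0 ⟶ ModuleCat.of R M'').hom
    with hπ₀def
  have hπ₀ : Function.Surjective π₀ :=
    (ModuleCat.epi_iff_surjective (P.π.f 0)).1 inferInstance
  have hd10 : ∀ z, π₀ (P.complex.d 1 0 z) = 0 := fun z =>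
    ConcreteCategory.congr_hom P.complex_d_comp_π_f_zero z
  have hex0 : ∀ x, π₀ x = 0 → ∃ z, P.complex.d 1 0 z = x :=
    (ShortComplex.moduleCat_exact_iff _).1 P.exact₀
  have hex1 : ∀ x, P.complex.d 1 0 x = 0 → ∃ z, P.complex.d 2 1 z = x :=
    (ShortComplex.moduleCat_exact_iff _).1 (P.exact_succ 0)
  set K := LinearMap.ker π₀ with hKdef
  have hmem1 : ∀ z, P.complex.d 1 0 z ∈ K := hd10
  set ρ1 : P.complex.X 1 →ₗ[R] K :=
    LinearMap.codRestrict K ((P.complex.d 1 0).hom : P.complex.X 1 →ₗ[R] P.complex.X 0) hmem1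
    with hρ1def
  have hρ1 : Function.Surjective ρ1 := by
    rintro ⟨x, hx⟩
    obtain ⟨z, hz⟩ := hex0 x hx
    exact ⟨z, Subtype.ext hz⟩
  set φl : P.complex.X 1 →ₗ[R] C := (φ.hom : P.complex.X 1 →ₗ[R] C) with hφldef
  have hker1 : ∀ z, ρ1 z = 0 → φl z = 0 := by
    intro z hz
    have h0 : P.complex.d 1 0 z = 0 := congrArg Subtype.val hz
    obtain ⟨w, hw⟩ := hex1 z h0
    rw [← hw]
    exact ConcreteCategory.congr_hom hφ w
  obtain ⟨φK, hφK⟩ := PExtAux.descend ρ1 φl hρ1 hker1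
  -- the pullback of π₀ and g
  set pr : (P.complex.X 0 × M) →ₗ[R] M'' :=
    π₀ ∘ₗ LinearMap.fst R _ _ - g ∘ₗ LinearMap.snd R _ _ with hprdef
  have hprap : ∀ a : P.complex.X 0 × M, pr a = π₀ a.1 - g a.2 := fun a => rfl
  set Yb := LinearMap.ker pr with hYbdef
  set qY : Yb →ₗ[R] M := LinearMap.snd R _ _ ∘ₗ Yb.subtype with hqYdef
  have hqYap : ∀ y : Yb, qY y = (y : P.complex.X 0 × M).2 := fun y => rfl
  have hqY : Function.Surjective qY := by
    intro m
    obtain ⟨z, hz⟩ := hπ₀ (g m)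
    refine ⟨⟨(z, m), ?_⟩, rfl⟩
    rw [LinearMap.mem_ker, hprap, hz, sub_self]
  have hmemt : ∀ k : LinearMap.ker qY, ((k : Yb) : P.complex.X 0 × M).1 ∈ K := by
    intro k
    have h1 : ((k : Yb) : P.complex.X 0 × M).2 = 0 := k.2
    have h2 : π₀ ((k : Yb) : P.complex.X 0 × M).1 - g ((k : Yb) : P.complex.X 0 × M).2 = 0 :=
      (k : Yb).2
    rw [h1, map_zero, sub_zero] at h2
    exact h2
  set toK : LinearMap.ker qY →ₗ[R] K :=
    LinearMap.codRestrict K ((LinearMap.fst R _ _) ∘ₗ Yb.subtype ∘ₗ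
      (LinearMap.ker qY).subtype) hmemt with htoKdef
  obtain ⟨σ, hσ⟩ := PExtAux.lift_of_ext1Zero C M hM qY hqY (φK ∘ₗ toK)
  -- extend σ∘inY along the pure mono f
  have hmemf : ∀ m', ((0 : P.complex.X 0), f m') ∈ Yb := by
    intro m'
    rw [LinearMap.mem_ker, hprap]
    have : g (f m') = 0 := hexfg.apply_apply_eq_zero m'
    rw [this, map_zero, sub_zero]
  set inY : M' →ₗ[R] Yb :=
    LinearMap.codRestrict Yb (LinearMap.prod 0 f) hmemf with hinYdef
  obtain ⟨ψ', hψ'⟩ := hC M' M f hf (σ ∘ₗ inY)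
  -- a section of the first projection of the pullback
  set fstY : ModuleCat.of R Yb ⟶ P.complex.X 0 :=
    ModuleCat.ofHom ((LinearMap.fst R _ M) ∘ₗ Yb.subtype : Yb →ₗ[R] P.complex.X 0) with hfstYdef
  haveI : Epi fstY := by
    refine (ModuleCat.epi_iff_surjective _).2 ?_
    intro x
    obtain ⟨m, hm⟩ := hg (π₀ x)
    refine ⟨⟨(x, m), ?_⟩, rfl⟩
    rw [LinearMap.mem_ker, hprap, hm, sub_self]
  set s : P.complex.X 0 ⟶ ModuleCat.of R Yb := Projective.factorThru (𝟙 _) fstY with hsdef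
  set sl : P.complex.X 0 →ₗ[R] Yb := (s.hom : P.complex.X 0 →ₗ[R] Yb) with hsldef
  have hs : ∀ x, (Yb.subtype (sl x)).1 = x := fun x =>
    ConcreteCategory.congr_hom (Projective.factorThru_comp (𝟙 _) fstY) x
  set ψ : P.complex.X 0 →ₗ[R] C :=
    σ ∘ₗ sl - ψ' ∘ₗ (LinearMap.snd R _ M) ∘ₗ Yb.subtype ∘ₗ sl with hψdef
  refine ⟨(ModuleCat.ofHom ψ : P.complex.X 0 ⟶ ModuleCat.of R C), ?_⟩
  apply ModuleCat.hom_ext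
  apply LinearMap.ext
  intro z
  show ψ (P.complex.d 1 0 z) = φl z
  set x := P.complex.d 1 0 z with hxdef
  have hx : π₀ x = 0 := hd10 z
  set m := (Yb.subtype (sl x)).2 with hmdef
  have hgm : g m = 0 := by
    have h2 : π₀ (Yb.subtype (sl x)).1 - g m = 0 := (sl x).2
    rw [hs x, hx, zero_sub, neg_eq_zero] at h2
    exact h2
  obtain ⟨m', hm'⟩ := (hexfg m).1 hgm
  have hk0mem : ((x, (0 : M)) : P.complex.X 0 × M) ∈ Yb := by
    rw [LinearMap.mem_ker, hprap, hx, map_zero, sub_zero]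
  set k0 : Yb := ⟨(x, 0), hk0mem⟩ with hk0def
  have hk0ker : k0 ∈ LinearMap.ker qY := by
    rw [LinearMap.mem_ker, hqYap]
  have hy : sl x = k0 + inY m' := by
    apply Subtype.ext
    apply Prod.ext
    · show (Yb.subtype (sl x)).1 = x + 0
      rw [hs x, add_zero]
    · show m = 0 + f m'
      rw [zero_add, hm']
  have e1 : σ k0 = φl z := by
    have h4 := hσ ⟨k0, hk0ker⟩
    have h5 : toK ⟨k0, hk0ker⟩ = ρ1 z := by
      apply Subtype.ext
      show x = P.complex.d 1 0 z
      rw [hxdef]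
    rw [h4]
    show φK (toK ⟨k0, hk0ker⟩) = φl z
    rw [h5, hφK]
  have e2 : σ (inY m') = ψ' m := by
    have h6 : ψ' (f m') = (σ ∘ₗ inY) m' := LinearMap.congr_fun hψ' m'
    rw [← hm']
    exact h6.symm
  have e3 : ψ x = σ (sl x) - ψ' m := rfl
  rw [e3, hy, map_add, e1, e2]
  abel

end
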